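/- Fix N ∈ ℕ, q, z, w, s₀, ρ̃ ∈ ℂ nonzero with q² ≠ 1, and define w(j', α; j, β) = (z/w)^{(1−αβ)/4} · s₀^{−(α+β)/4} · ρ̃ · q^{jβ} for α, β ∈ {−1,+1} and j' = j + (α−β)/2. Then for sequences α, β ∈ {−1,+1}^N with Σα_i = Σβ_i = n, the product over one cyclic path, Π_{k=1}^{N} w(j_k, α_k; j_{k-1}, β_k) with j_k = j + ½Σ_{i<k}(α_i − β_i) and j_0 = j_N = j (consistency from Σα = Σβ), equals s₀^{−n/2} · q^{nj} · (zq/w)^{N/4} · ρ̃^N · q^{(1/4)Σ_{i<k}(β_kα_i − α_kβ_i)} · (w/(zq))^{(1/4)Σ_i α_iβ_i}. -/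
import Mathlib

open Finset

lemma QM_aux_offdiag (M : ℕ) (f g : ℕ → ℤ) :
    ∑ k ∈ Finset.range M, ∑ i ∈ Finset.range k, (f k * g i + g k * f i)
      = (∑ k ∈ Finset.range M, f k) * (∑ k ∈ Finset.range M, g k)
        - ∑ k ∈ Finset.range M, f k * g k := by
  induction M with
  | zero => simp
  | succ m ih =>
    rw [Finset.sum_range_succ, Finset.sum_range_succ, Finset.sum_range_succ,
        Finset.sum_range_succ, ih, Finset.sum_add_distrib, ← Finset.mul_sum, ← Finset.mul_sum]
    ring

lemma QM_prod_zpow {ι : Type*} (a : ℂ) (ha : a ≠ 0) (s : Finset ι) (f : ι → ℤ) :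
    ∏ i ∈ s, a ^ f i = a ^ (∑ i ∈ s, f i) := by
  induction s using Finset.cons_induction with
  | empty => simp
  | cons i s hi ih => rw [Finset.prod_cons, Finset.sum_cons, zpow_add₀ ha, ih]

lemma QM_fin_Iio_sum {N : ℕ} (f : ℕ → ℤ) (k : Fin N) :
    ∑ i ∈ Finset.Iio k, f i.val = ∑ m ∈ Finset.range k.val, f m := by
  rw [← Nat.Iio_eq_range, ← Fin.map_valEmbedding_Iio, Finset.sum_map]
  rfl

lemma QM_key (M : ℕ) (nn : ℤ) (a b : ℕ → ℤ)
    (ha : ∀ i < M, a i = 1 ∨ a i = -1) (hb : ∀ i < M, b i = 1 ∨ b i = -1)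
    (hsa : ∑ i ∈ Finset.range M, a i = nn) (hsb : ∑ i ∈ Finset.range M, b i = nn) :
    ∑ k ∈ Finset.range M, (a k * b k - 1 + 2 * b k * ∑ i ∈ Finset.range k, (a i - b i))
      = ∑ k ∈ Finset.range M, ∑ i ∈ Finset.range k, (b k * a i - a k * b i) := by
  have h1 := QM_aux_offdiag M a b
  have h2 := QM_aux_offdiag M b b
  have hbb : ∑ k ∈ Finset.range M, b k * b k = M := by
    rw [Finset.sum_congr rfl (fun k hk => ?_), Finset.sum_const, Finset.card_range,
      nsmul_eq_mul, mul_one]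
    rcases hb k (Finset.mem_range.mp hk) with h | h <;> rw [h] <;> norm_num
  -- split all double sums
  have e1 : ∀ k, ∑ i ∈ Finset.range k, (a k * b i + b k * a i)
      = a k * (∑ i ∈ Finset.range k, b i) + b k * (∑ i ∈ Finset.range k, a i) := by
    intro k; rw [Finset.sum_add_distrib, ← Finset.mul_sum, ← Finset.mul_sum]
  have e2 : ∀ k, ∑ i ∈ Finset.range k, (b k * b i + b k * b i)
      = 2 * (b k * (∑ i ∈ Finset.range k, b i)) := by
    intro k; rw [Finset.sum_add_distrib, ← Finset.mul_sum]; ring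
  rw [Finset.sum_congr rfl (fun k _ => e1 k)] at h1
  rw [Finset.sum_congr rfl (fun k _ => e2 k)] at h2
  rw [Finset.sum_add_distrib] at h1
  rw [← Finset.mul_sum] at h2
  have lhs1 : ∑ k ∈ Finset.range M, (a k * b k - 1 + 2 * b k * ∑ i ∈ Finset.range k, (a i - b i))
      = (∑ k ∈ Finset.range M, a k * b k) - M
        + 2 * ∑ k ∈ Finset.range M, b k * (∑ i ∈ Finset.range k, a i)
        - 2 * ∑ k ∈ Finset.range M, b k * (∑ i ∈ Finset.range k, b i) := by
    rw [Finset.sum_add_distrib, Finset.sum_sub_distrib, Finset.sum_const, Finset.card_range]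
    have : ∀ k, 2 * b k * ∑ i ∈ Finset.range k, (a i - b i)
        = 2 * (b k * (∑ i ∈ Finset.range k, a i)) - 2 * (b k * (∑ i ∈ Finset.range k, b i)) := by
      intro k; rw [Finset.sum_sub_distrib]; ring
    rw [Finset.sum_congr rfl (fun k _ => this k), Finset.sum_sub_distrib,
      ← Finset.mul_sum, ← Finset.mul_sum]
    push_cast
    ring
  have rhs1 : ∑ k ∈ Finset.range M, ∑ i ∈ Finset.range k, (b k * a i - a k * b i)
      = (∑ k ∈ Finset.range M, b k * (∑ i ∈ Finset.range k, a i))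
        - ∑ k ∈ Finset.range M, a k * (∑ i ∈ Finset.range k, b i) := by
    have : ∀ k, ∑ i ∈ Finset.range k, (b k * a i - a k * b i)
        = b k * (∑ i ∈ Finset.range k, a i) - a k * (∑ i ∈ Finset.range k, b i) := by
      intro k; rw [Finset.sum_sub_distrib, ← Finset.mul_sum, ← Finset.mul_sum]
    rw [Finset.sum_congr rfl (fun k _ => this k), Finset.sum_sub_distrib]
  rw [lhs1, rhs1]
  rw [hsa] at h1
  rw [hsb] at h1 h2
  linarith [h1, h2, hbb]

/-- the explicit product formula for one cyclic path of
`W`-matrix elements (s₁ = s₂ = 0) of the 6-vertex Q-operator, eq. (5.7) of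
the paper, for a single fixed summand `j` of the trace. Branches of the
fractional powers are fixed by `q4⁴ = q`, `f4⁴ = zq/w`, `sqs0² = s₀`,
`sqzw = f4²/q4²` (a square root of `z/w`). -/
theorem Q_matrix_explicit_product (N : ℕ) (n j : ℤ)
    (q z w s0 ρ sqzw sqs0 f4 q4 : ℂ)
    (hq : q ≠ 0) (hq2 : q ^ 2 ≠ 1) (hz : z ≠ 0) (hw : w ≠ 0)
    (hs0 : s0 ≠ 0) (hρ : ρ ≠ 0)
    (hq4 : q4 ^ 4 = q) (hf4 : f4 ^ 4 = z * q / w)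
    (hsqs0 : sqs0 ^ 2 = s0) (hsqzw : sqzw = f4 ^ 2 / q4 ^ 2)
    (α β : Fin N → ℤ)
    (hα : ∀ i, α i = 1 ∨ α i = -1) (hβ : ∀ i, β i = 1 ∨ β i = -1)
    (hαs : ∑ i, α i = n) (hβs : ∑ i, β i = n) :
    ∏ k : Fin N,
        (sqzw ^ ((1 - α k * β k) / 2) * sqs0 ^ (-((α k + β k) / 2)) * ρ *
          q ^ ((j + (∑ i ∈ Finset.Iio k, (α i - β i)) / 2) * β k))
      = sqs0 ^ (-n) * q ^ (n * j) * f4 ^ (N : ℤ) * ρ ^ (N : ℤ) *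
          q4 ^ (∑ k : Fin N, ∑ i ∈ Finset.Iio k, (β k * α i - α k * β i)) *
          f4 ^ (-(∑ i : Fin N, α i * β i)) := by
  -- nonvanishing
  have hq4ne : q4 ≠ 0 := by
    intro h; apply hq; rw [← hq4, h]; ring
  have hzqw : z * q / w ≠ 0 := div_ne_zero (mul_ne_zero hz hq) hw
  have hf4ne : f4 ≠ 0 := by
    intro h; apply hzqw; rw [← hf4, h]; ring
  have hs0ne : sqs0 ≠ 0 := by
    intro h; apply hs0; rw [← hsqs0, h]; ring
  -- abbreviations
  set S : Fin N → ℤ := fun k => ∑ i ∈ Finset.Iio k, (α i - β i) with hSdef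
  -- q powers via q4
  have hq' : ∀ m : ℤ, q ^ m = q4 ^ (4 * m) := by
    intro m
    rw [← hq4, ← zpow_natCast q4 4, ← zpow_mul]
    norm_num
  have hzw : sqzw = f4 ^ (2:ℤ) * q4 ^ (-2:ℤ) := by
    rw [hsqzw, div_eq_mul_inv, ← zpow_natCast f4 2, ← zpow_natCast q4 2, zpow_neg]
    norm_num
  -- sqzw power
  have hsq : ∀ k, sqzw ^ ((1 - α k * β k) / 2)
      = f4 ^ (1 - α k * β k) * q4 ^ (α k * β k - 1) := by
    intro k
    have h2e : 2 * ((1 - α k * β k) / 2) = 1 - α k * β k := by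
      rcases hα k with h | h <;> rcases hβ k with h' | h' <;> rw [h, h'] <;> decide
    have h2e' : (-2 : ℤ) * ((1 - α k * β k) / 2) = α k * β k - 1 := by omega
    rw [hzw, mul_zpow, ← zpow_mul, ← zpow_mul, h2e, h2e']
  -- evenness of S k
  have hSev : ∀ k : Fin N, 2 * (S k / 2) = S k := by
    intro k
    apply Int.two_mul_ediv_two_of_even
    rw [hSdef]
    apply Finset.even_sum
    intro i _
    rcases hα i with h | h <;> rcases hβ i with h' | h' <;> rw [h, h'] <;> decide
  -- per-factor rewrite
  have hfac : ∀ k : Fin N,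
      sqzw ^ ((1 - α k * β k) / 2) * sqs0 ^ (-((α k + β k) / 2)) * ρ *
          q ^ ((j + S k / 2) * β k)
        = f4 ^ (1 - α k * β k)
          * q4 ^ ((α k * β k - 1) + 4 * ((j + S k / 2) * β k))
          * sqs0 ^ (-((α k + β k) / 2)) * ρ := by
    intro k
    rw [hsq k, hq' ((j + S k / 2) * β k), zpow_add₀ hq4ne]
    ring
  -- product decomposition
  have hprod : ∏ k : Fin N,
      (sqzw ^ ((1 - α k * β k) / 2) * sqs0 ^ (-((α k + β k) / 2)) * ρ *
        q ^ ((j + S k / 2) * β k))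
      = f4 ^ (∑ k : Fin N, (1 - α k * β k))
        * q4 ^ (∑ k : Fin N, ((α k * β k - 1) + 4 * ((j + S k / 2) * β k)))
        * sqs0 ^ (∑ k : Fin N, (-((α k + β k) / 2)))
        * ρ ^ (N : ℤ) := by
    rw [Finset.prod_congr rfl (fun k _ => hfac k), Finset.prod_mul_distrib,
      Finset.prod_mul_distrib, Finset.prod_mul_distrib,
      QM_prod_zpow f4 hf4ne, QM_prod_zpow q4 hq4ne, QM_prod_zpow sqs0 hs0ne,
      Finset.prod_const, Finset.card_univ, Fintype.card_fin, ← zpow_natCast ρ N]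
  rw [hprod]
  -- sum of s0 exponents
  have hsum3 : (∑ k : Fin N, (-((α k + β k) / 2))) = -n := by
    have hpt : ∀ k : Fin N, 2 * ((α k + β k) / 2) = α k + β k := by
      intro k
      rcases hα k with h | h <;> rcases hβ k with h' | h' <;> rw [h, h'] <;> decide
    have h2 : 2 * (∑ k : Fin N, ((α k + β k) / 2)) = 2 * n := by
      rw [Finset.mul_sum, Finset.sum_congr rfl (fun k _ => hpt k),
        Finset.sum_add_distrib, hαs, hβs]
      ring
    have h3 : (∑ k : Fin N, ((α k + β k) / 2)) = n := by omega
    rw [Finset.sum_neg_distrib, h3]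
  -- sum of f4 exponents
  have hsum1 : (∑ k : Fin N, (1 - α k * β k)) = (N : ℤ) + (-(∑ i : Fin N, α i * β i)) := by
    rw [Finset.sum_sub_distrib, Finset.sum_const, Finset.card_univ, Fintype.card_fin]
    push_cast
    ring
  -- transfer to range sums and apply the key identity
  set a : ℕ → ℤ := fun m => if h : m < N then α ⟨m, h⟩ else 1 with hadef
  set b : ℕ → ℤ := fun m => if h : m < N then β ⟨m, h⟩ else 1 with hbdef
  have haa : ∀ i : Fin N, a i.val = α i := by
    intro i; simp only [hadef, i.isLt, dif_pos, Fin.eta]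
  have hbb : ∀ i : Fin N, b i.val = β i := by
    intro i; simp only [hbdef, i.isLt, dif_pos, Fin.eta]
  have hSrange : ∀ k : Fin N, S k = ∑ m ∈ Finset.range k.val, (a m - b m) := by
    intro k
    rw [← QM_fin_Iio_sum (fun m => a m - b m) k, hSdef]
    exact Finset.sum_congr rfl (fun i _ => by rw [haa, hbb])
  have hsa : ∑ i ∈ Finset.range N, a i = n := by
    rw [← Fin.sum_univ_eq_sum_range a N, ← hαs]
    exact Finset.sum_congr rfl (fun i _ => haa i)
  have hsb : ∑ i ∈ Finset.range N, b i = n := by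
    rw [← Fin.sum_univ_eq_sum_range b N, ← hβs]
    exact Finset.sum_congr rfl (fun i _ => hbb i)
  have hav : ∀ i < N, a i = 1 ∨ a i = -1 := by
    intro i hi; rw [hadef]; simp only [dif_pos hi]; exact hα _
  have hbv : ∀ i < N, b i = 1 ∨ b i = -1 := by
    intro i hi; rw [hbdef]; simp only [dif_pos hi]; exact hβ _
  have hkey := QM_key N n a b hav hbv hsa hsb
  have hD : (∑ k : Fin N, ∑ i ∈ Finset.Iio k, (β k * α i - α k * β i))
      = ∑ k ∈ Finset.range N, ∑ i ∈ Finset.range k, (b k * a i - a k * b i) := by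
    rw [← Fin.sum_univ_eq_sum_range (fun m => ∑ i ∈ Finset.range m, (b m * a i - a m * b i)) N]
    refine Finset.sum_congr rfl (fun k _ => ?_)
    rw [← QM_fin_Iio_sum (fun m => b k.val * a m - a k.val * b m) k]
    exact Finset.sum_congr rfl (fun i _ => by rw [haa i, hbb i, haa k, hbb k])
  have hsum2 : (∑ k : Fin N, ((α k * β k - 1) + 4 * ((j + S k / 2) * β k)))
      = 4 * (n * j) + (∑ k : Fin N, ∑ i ∈ Finset.Iio k, (β k * α i - α k * β i)) := by
    have hpt2 : ∀ k : Fin N, (α k * β k - 1) + 4 * ((j + S k / 2) * β k)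
        = (α k * β k - 1 + 2 * β k * S k) + 4 * j * β k := by
      intro k
      linear_combination (2 * β k) * hSev k
    rw [Finset.sum_congr rfl (fun k _ => hpt2 k), Finset.sum_add_distrib]
    have hjb : ∑ k : Fin N, 4 * j * β k = 4 * (n * j) := by
      rw [← Finset.mul_sum, hβs]; ring
    have hmain : (∑ k : Fin N, (α k * β k - 1 + 2 * β k * S k))
        = ∑ k : Fin N, ∑ i ∈ Finset.Iio k, (β k * α i - α k * β i) := by
      rw [hD, ← hkey,
        ← Fin.sum_univ_eq_sum_range
          (fun m => a m * b m - 1 + 2 * b m * ∑ i ∈ Finset.range m, (a i - b i)) N]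
      refine Finset.sum_congr rfl (fun k _ => ?_)
      rw [haa k, hbb k, ← hSrange k]
    rw [hmain, hjb]
    ring
  rw [hsum1, hsum2, hsum3, zpow_add₀ hf4ne, zpow_add₀ hq4ne, ← hq' (n * j)]
  ring
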